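/- arXiv:1707.04355 — 2 statements merged into one kernel-verified Lean document; each statement's English description precedes it below -/
import Mathlib

section
/- Let M be the 5×5 integer matrix with rows (-6,1,1,1,0), (1,-2,0,0,1), (1,0,-2,0,1), (1,0,0,-2,1), (0,1,1,1,-2), and let v = (1,2,2,2,3) ∈ ℤ^5. Then M·v = 0, and the quotient group v^⊥ / M(ℤ^5) — where v^⊥ = {x ∈ ℤ^5 : ⟨x,v⟩ = 0} and M(ℤ^5) is the image of the ℤ-linear map x ↦ Mx — is isomorphic to (ℤ/2ℤ) × (ℤ/2ℤ). -/
/-- The intersection matrix `M`. -/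
def interMat : Matrix (Fin 5) (Fin 5) ℤ :=
  !![-6, 1, 1, 1, 0;
      1,-2, 0, 0, 1;
      1, 0,-2, 0, 1;
      1, 0, 0,-2, 1;
      0, 1, 1, 1,-2]

/-- The multiplicity vector `v = (1,2,2,2,3)`. -/
def multVec : Fin 5 → ℤ := ![1, 2, 2, 2, 3]

/-- The subgroup `v^⊥ = {x ∈ ℤ^5 : ⟨x, v⟩ = 0}`. -/
def perpSubgroup : AddSubgroup (Fin 5 → ℤ) where
  carrier := {x | dotProduct x multVec = 0}
  add_mem' := by
    intro a b ha hb
    simp only [Set.mem_setOf_eq, add_dotProduct] at *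
    omega
  zero_mem' := by simp [zero_dotProduct]
  neg_mem' := by
    intro a ha
    simp only [Set.mem_setOf_eq, neg_dotProduct] at *
    omega

/-- The image subgroup `M(ℤ^5)`. -/
def imageSubgroup : AddSubgroup (Fin 5 → ℤ) :=
  (interMat.mulVecLin.toAddMonoidHom).range

lemma mem_perp_iff (x : Fin 5 → ℤ) :
    x ∈ perpSubgroup ↔ x 0 + 2 * x 1 + 2 * x 2 + 2 * x 3 + 3 * x 4 = 0 := by
  show dotProduct x multVec = 0 ↔ _
  simp [dotProduct, multVec, Fin.sum_univ_five]
  constructor <;> intro h <;> omega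

lemma mulVec_eq (w : Fin 5 → ℤ) :
    interMat.mulVec w =
      ![-6 * w 0 + w 1 + w 2 + w 3,
        w 0 - 2 * w 1 + w 4,
        w 0 - 2 * w 2 + w 4,
        w 0 - 2 * w 3 + w 4,
        w 1 + w 2 + w 3 - 2 * w 4] := by
  funext i
  fin_cases i <;>
    simp [interMat, Matrix.mulVec, dotProduct, Fin.sum_univ_five] <;> ring

/-- The quotient map `v^⊥ → (ℤ/2) × (ℤ/2)`, `x ↦ (x₁ + x₃, x₁ + x₂)`. -/
def phi : perpSubgroup →+ ZMod 2 × ZMod 2 where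
  toFun x := ((((x : Fin 5 → ℤ) 1 + (x : Fin 5 → ℤ) 3 : ℤ) : ZMod 2),
              (((x : Fin 5 → ℤ) 1 + (x : Fin 5 → ℤ) 2 : ℤ) : ZMod 2))
  map_zero' := by simp
  map_add' := by
    intro a b
    simp only [AddSubgroup.coe_add, Pi.add_apply, Prod.mk_add_mk, Prod.mk.injEq]
    constructor <;> push_cast <;> ring

lemma phi_surj : Function.Surjective phi := by
  have h1 : (![0, 1, -1, 0, 0] : Fin 5 → ℤ) ∈ perpSubgroup := by
    rw [mem_perp_iff]; decide
  have h2 : (![0, 1, 0, -1, 0] : Fin 5 → ℤ) ∈ perpSubgroup := by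
    rw [mem_perp_iff]; decide
  have h3 : (![0, 2, -1, -1, 0] : Fin 5 → ℤ) ∈ perpSubgroup := by
    rw [mem_perp_iff]; decide
  rintro ⟨c1, c2⟩
  fin_cases c1 <;> fin_cases c2
  · exact ⟨0, by simp [phi]; rfl⟩
  · exact ⟨⟨_, h2⟩, by simp [phi]; try decide⟩
  · exact ⟨⟨_, h1⟩, by simp [phi]; try decide⟩
  · exact ⟨⟨_, h3⟩, by simp [phi]; try decide⟩

lemma phi_ker : phi.ker = imageSubgroup.addSubgroupOf perpSubgroup := by
  ext x
  rw [AddMonoidHom.mem_ker, AddSubgroup.mem_addSubgroupOf]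
  have hx := (mem_perp_iff _).mp x.2
  set y : Fin 5 → ℤ := (x : Fin 5 → ℤ) with hy
  constructor
  · intro h
    have h1 : ((y 1 + y 3 : ℤ) : ZMod 2) = 0 := congrArg Prod.fst h
    have h2 : ((y 1 + y 2 : ℤ) : ZMod 2) = 0 := congrArg Prod.snd h
    rw [ZMod.intCast_zmod_eq_zero_iff_dvd] at h1 h2
    obtain ⟨a, ha⟩ := h1
    obtain ⟨b, hb⟩ := h2
    refine ⟨![y 4 + a + b, y 4 + a + b, y 1 + y 4 + a, y 1 + y 4 + b,
        y 1 + y 4 + a + b], ?_⟩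
    show interMat.mulVec _ = y
    rw [mulVec_eq]
    funext i
    fin_cases i <;> simp <;> omega
  · rintro ⟨w, hw⟩
    have hw' : interMat.mulVec w = y := hw
    rw [mulVec_eq] at hw'
    have e1 : y 1 = w 0 - 2 * w 1 + w 4 := (congrFun hw' 1).symm
    have e2 : y 2 = w 0 - 2 * w 2 + w 4 := (congrFun hw' 2).symm
    have e3 : y 3 = w 0 - 2 * w 3 + w 4 := (congrFun hw' 3).symm
    have d1 : (2 : ℤ) ∣ y 1 + y 3 := ⟨w 0 - w 1 - w 3 + w 4, by omega⟩
    have d2 : (2 : ℤ) ∣ y 1 + y 2 := ⟨w 0 - w 1 - w 2 + w 4, by omega⟩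
    have : phi x = ((((y 1 + y 3 : ℤ) : ZMod 2)), (((y 1 + y 2 : ℤ) : ZMod 2))) := rfl
    rw [this, Prod.mk_eq_zero, ZMod.intCast_zmod_eq_zero_iff_dvd,
      ZMod.intCast_zmod_eq_zero_iff_dvd]
    exact ⟨d1, d2⟩

theorem stmt0 :
    interMat.mulVec multVec = 0 ∧
    Nonempty ((perpSubgroup ⧸ imageSubgroup.addSubgroupOf perpSubgroup) ≃+
      (ZMod 2 × ZMod 2)) := by
  constructor
  · rw [mulVec_eq]
    funext i
    fin_cases i <;> simp [multVec]
  · exact ⟨(QuotientAddGroup.quotientAddEquivOfEq phi_ker.symm).trans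
      (QuotientAddGroup.quotientKerEquivOfSurjective phi phi_surj)⟩
end

section
/- Let p be a prime and let v denote the p-adic valuation on ℚ_p. Suppose c₂, c₆, c₈, c₁₀, c₁₂, c₁₄, c₁₈ ∈ ℤ_p and x, y ∈ ℚ_p satisfy y³ = x³y + c₁₀x² + x(c₂y² + c₈y + c₁₄) + c₆y² + c₁₂y + c₁₈. If v(x) < 0 and v(y) < 0, then 2·v(y) = 3·v(x). -/
section aux
variable {p : ℕ} [Fact p.Prime]

private lemma val_neg' (x : ℚ_[p]) : (-x).valuation = x.valuation := by
  by_cases hx : x = 0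
  · simp [hx]
  · have h1 : ((-1 : ℚ_[p])).valuation = 0 := by
      have := Padic.valuation_intCast (p := p) (-1)
      simpa [padicValInt] using this
    have := Padic.valuation_mul (x := (-1 : ℚ_[p])) (y := x) (by norm_num) hx
    simpa [h1] using this

private lemma le_val_add' {m : ℤ} {s t : ℚ_[p]} (hm : m ≤ 0)
    (hs : m ≤ s.valuation) (ht : m ≤ t.valuation) : m ≤ (s + t).valuation := by
  by_cases h : s + t = 0
  · simpa [h, Padic.valuation_zero] using hm
  · exact le_trans (le_min hs ht) (Padic.le_valuation_add h)

private lemma le_val_smul' {m : ℤ} (c : ℤ_[p]) {z : ℚ_[p]} (hm : m ≤ 0)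
    (hz : m ≤ z.valuation) : m ≤ ((c : ℚ_[p]) * z).valuation := by
  by_cases hc : (c : ℚ_[p]) = 0
  · simpa [hc, Padic.valuation_zero] using hm
  by_cases hz0 : z = 0
  · simpa [hz0, Padic.valuation_zero] using hm
  rw [Padic.valuation_mul hc hz0]
  have : (0 : ℤ) ≤ (c : ℚ_[p]).valuation := (by rw [PadicInt.valuation_coe]; exact Int.natCast_nonneg _)
  omega

private lemma val_add_eq' {s t : ℚ_[p]} (hs : s ≠ 0)
    (h : s.valuation < t.valuation) : (s + t).valuation = s.valuation := by
  have hst : s + t ≠ 0 := by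
    intro h0
    rw [eq_neg_of_add_eq_zero_right h0, val_neg' s] at h
    exact lt_irrefl _ h
  have h1 : min s.valuation t.valuation ≤ (s + t).valuation :=
    Padic.le_valuation_add hst
  rw [min_eq_left h.le] at h1
  have h2 : s.valuation = ((s + t) + -t).valuation := by ring_nf
  have h3 : min (s + t).valuation (-t).valuation ≤ s.valuation := by
    rw [h2]
    by_cases ht : t = 0
    · simp [ht]
    · exact Padic.le_valuation_add (by rwa [add_neg_cancel_right])
  rw [val_neg'] at h3
  rcases min_le_iff.mp h3 with h4 | h4
  · omega
  · omega
end aux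

/-- For a point on the E₇ family of curves over `ℚ_p` with integral coefficients,
if both `x` and `y` have negative valuation then `2·v(y) = 3·v(x)`. -/
theorem stmt3 (p : ℕ) [Fact p.Prime]
    (c2 c6 c8 c10 c12 c14 c18 : ℤ_[p]) (x y : ℚ_[p])
    (heq : y ^ 3 = x ^ 3 * y + (c10 : ℚ_[p]) * x ^ 2 +
      x * ((c2 : ℚ_[p]) * y ^ 2 + (c8 : ℚ_[p]) * y + (c14 : ℚ_[p])) +
      (c6 : ℚ_[p]) * y ^ 2 + (c12 : ℚ_[p]) * y + (c18 : ℚ_[p]))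
    (hx : x.valuation < 0) (hy : y.valuation < 0) :
    2 * y.valuation = 3 * x.valuation := by
  have hx0 : x ≠ 0 := by rintro rfl; simp [Padic.valuation_zero] at hx
  have hy0 : y ≠ 0 := by rintro rfl; simp [Padic.valuation_zero] at hy
  set a := x.valuation with ha
  set b := y.valuation with hb
  have hx2 : (x ^ 2).valuation = 2 * a := by
    rw [sq, Padic.valuation_mul hx0 hx0]; ring
  have hx3 : (x ^ 3).valuation = 3 * a := by
    rw [pow_succ, Padic.valuation_mul (pow_ne_zero 2 hx0) hx0, hx2]; ring
  have hy2 : (y ^ 2).valuation = 2 * b := by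
    rw [sq, Padic.valuation_mul hy0 hy0]; ring
  have hy3 : (y ^ 3).valuation = 3 * b := by
    rw [pow_succ, Padic.valuation_mul (pow_ne_zero 2 hy0) hy0, hy2]; ring
  have hx3y : (x ^ 3 * y).valuation = 3 * a + b :=
    by rw [Padic.valuation_mul (pow_ne_zero 3 hx0) hy0, hx3]
  -- valuation of both sides of heq agree
  have hveq : (y ^ 3).valuation = (x ^ 3 * y + (c10 : ℚ_[p]) * x ^ 2 +
      x * ((c2 : ℚ_[p]) * y ^ 2 + (c8 : ℚ_[p]) * y + (c14 : ℚ_[p])) +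
      (c6 : ℚ_[p]) * y ^ 2 + (c12 : ℚ_[p]) * y + (c18 : ℚ_[p])).valuation := by
    rw [← heq]
  by_contra hne
  -- helper to bound valuation of x * (c2 y² + c8 y + c14)
  have hxmul : ∀ m : ℤ, m ≤ 0 → m - a ≤ 2 * b → m - a ≤ b → m - a ≤ 0 →
      m ≤ (x * ((c2 : ℚ_[p]) * y ^ 2 + (c8 : ℚ_[p]) * y + (c14 : ℚ_[p]))).valuation := by
    intro m hm h1 h2 h3
    by_cases hz : (c2 : ℚ_[p]) * y ^ 2 + (c8 : ℚ_[p]) * y + (c14 : ℚ_[p]) = 0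
    · simpa [hz, Padic.valuation_zero] using hm
    · rw [Padic.valuation_mul hx0 hz]
      have : m - a ≤ ((c2 : ℚ_[p]) * y ^ 2 + (c8 : ℚ_[p]) * y + (c14 : ℚ_[p])).valuation := by
        apply le_val_add' h3
        apply le_val_add' h3
        · exact le_val_smul' c2 h3 (by omega)
        · exact le_val_smul' c8 h3 (by omega)
        · have hc14 : (0:ℤ) ≤ ((c14 : ℚ_[p])).valuation := (by rw [PadicInt.valuation_coe]; exact Int.natCast_nonneg _)
          omega
      omega
  have hiff : 2 * b ≠ 3 * a := hne
  have ha1 : a ≤ -1 := by omega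
  have hb1 : b ≤ -1 := by omega
  rcases lt_or_gt_of_ne hiff with hcase | hcase
  · -- 2b < 3a : v(LHS) = 3b, every RHS term ≥ 3b+1
    have hab : b ≤ a - 1 := by omega
    have key : 3 * b + 1 ≤ (x ^ 3 * y + (c10 : ℚ_[p]) * x ^ 2 +
        x * ((c2 : ℚ_[p]) * y ^ 2 + (c8 : ℚ_[p]) * y + (c14 : ℚ_[p])) +
        (c6 : ℚ_[p]) * y ^ 2 + (c12 : ℚ_[p]) * y + (c18 : ℚ_[p])).valuation := by
      have hm : (3 : ℤ) * b + 1 ≤ 0 := by omega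
      apply le_val_add' hm
      apply le_val_add' hm
      apply le_val_add' hm
      apply le_val_add' hm
      apply le_val_add' hm
      · rw [hx3y]; omega
      · exact le_val_smul' c10 hm (by omega)
      · exact hxmul _ hm (by omega) (by omega) (by omega)
      · exact le_val_smul' c6 hm (by omega)
      · exact le_val_smul' c12 hm (by omega)
      · have h18 : (0:ℤ) ≤ ((c18 : ℚ_[p])).valuation := (by rw [PadicInt.valuation_coe]; exact Int.natCast_nonneg _); omega
    rw [← hveq, hy3] at key
    omega
  · -- 3a < 2b : RHS valuation = 3a + b < 3b
    have hrest : 3 * a + b + 1 ≤ ((c10 : ℚ_[p]) * x ^ 2 +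
        x * ((c2 : ℚ_[p]) * y ^ 2 + (c8 : ℚ_[p]) * y + (c14 : ℚ_[p])) +
        (c6 : ℚ_[p]) * y ^ 2 + (c12 : ℚ_[p]) * y + (c18 : ℚ_[p])).valuation := by
      have hm : 3 * a + b + 1 ≤ 0 := by omega
      apply le_val_add' hm
      apply le_val_add' hm
      apply le_val_add' hm
      apply le_val_add' hm
      · exact le_val_smul' c10 hm (by omega)
      · exact hxmul _ hm (by omega) (by omega) (by omega)
      · exact le_val_smul' c6 hm (by omega)
      · exact le_val_smul' c12 hm (by omega)
      · have h18 : (0:ℤ) ≤ ((c18 : ℚ_[p])).valuation := (by rw [PadicInt.valuation_coe]; exact Int.natCast_nonneg _); omega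
    have hrw : x ^ 3 * y + (c10 : ℚ_[p]) * x ^ 2 +
        x * ((c2 : ℚ_[p]) * y ^ 2 + (c8 : ℚ_[p]) * y + (c14 : ℚ_[p])) +
        (c6 : ℚ_[p]) * y ^ 2 + (c12 : ℚ_[p]) * y + (c18 : ℚ_[p]) =
        x ^ 3 * y + ((c10 : ℚ_[p]) * x ^ 2 +
        x * ((c2 : ℚ_[p]) * y ^ 2 + (c8 : ℚ_[p]) * y + (c14 : ℚ_[p])) +
        (c6 : ℚ_[p]) * y ^ 2 + (c12 : ℚ_[p]) * y + (c18 : ℚ_[p])) := by ring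
    rw [hrw] at hveq
    have key : (x ^ 3 * y + ((c10 : ℚ_[p]) * x ^ 2 +
        x * ((c2 : ℚ_[p]) * y ^ 2 + (c8 : ℚ_[p]) * y + (c14 : ℚ_[p])) +
        (c6 : ℚ_[p]) * y ^ 2 + (c12 : ℚ_[p]) * y + (c18 : ℚ_[p]))).valuation
        = 3 * a + b := by
      rw [val_add_eq' (mul_ne_zero (pow_ne_zero 3 hx0) hy0) (by rw [hx3y]; omega), hx3y]
    rw [← hveq] at key
    · rw [hy3] at key; omega
end
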